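/- Let 𝔤 be a simple complex Lie algebra and θ : 𝔤 → 𝔤 an involutive Lie algebra automorphism with θ ≠ id. Let 𝔥 = {ξ ∈ 𝔤 : θ(ξ) = ξ} and 𝔳 = {η ∈ 𝔤 : θ(η) = -η}. Then 𝔥 is a Lie subalgebra of 𝔤 and the adjoint action of 𝔥 on 𝔳 is faithful, i.e. if ξ ∈ 𝔥 satisfies [ξ, η] = 0 for all η ∈ 𝔳, then ξ = 0. -/

import Mathlib

/-- For a simple complex Lie algebra `L` with an involutive automorphism `θ ≠ id`,
the fixed subspace `𝔥` is a Lie subalgebra and its adjoint action on the `(-1)`-eigenspace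
`𝔳` is faithful. -/
theorem stmt_9 (L : Type*) [LieRing L] [LieAlgebra ℂ L] [FiniteDimensional ℂ L]
    [LieAlgebra.IsSimple ℂ L]
    (θ : L ≃ₗ⁅ℂ⁆ L) (hinv : ∀ x, θ (θ x) = x) (hne : ∃ x, θ x ≠ x) :
    (∀ x y : L, θ x = x → θ y = y → θ ⁅x, y⁆ = ⁅x, y⁆) ∧
    (∀ ξ : L, θ ξ = ξ → (∀ η : L, θ η = -η → ⁅ξ, η⁆ = 0) → ξ = 0) := by
  have hlie : ∀ x y : L, θ ⁅x, y⁆ = ⁅θ x, θ y⁆ := fun x y => LieHom.map_lie θ.toLieHom x y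
  have hadd : ∀ a b : L, θ (a + b) = θ a + θ b := fun a b => θ.toLinearEquiv.map_add a b
  have hsub : ∀ a b : L, θ (a - b) = θ a - θ b := fun a b => θ.toLinearEquiv.map_sub a b
  have hsmul : ∀ (c : ℂ) (a : L), θ (c • a) = c • θ a := fun c a => θ.toLinearEquiv.map_smul c a
  constructor
  · intro x y hx hy
    rw [hlie, hx, hy]
  · intro ξ hξ hcomm
    -- the (-1)-eigenspace as a submodule
    set V : Submodule ℂ L :=
      { carrier := {x : L | θ x = -x}
        add_mem' := by
          intro a b ha hb
          simp only [Set.mem_setOf_eq] at *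
          rw [hadd, ha, hb, neg_add]
        zero_mem' := by
          simp only [Set.mem_setOf_eq]
          rw [show (0 : L) = (0 : ℂ) • (0 : L) by simp, hsmul]; simp
        smul_mem' := by
          intro c a ha
          simp only [Set.mem_setOf_eq] at *
          rw [hsmul, ha, smul_neg] } with hVdef
    have hVmem : ∀ x, x ∈ V ↔ θ x = -x := fun x => Iff.rfl
    -- brackets
    have hHV : ∀ h v : L, θ h = h → v ∈ V → ⁅h, v⁆ ∈ V := by
      intro h v hh hv
      rw [hVmem] at hv ⊢
      rw [hlie, hh, hv, lie_neg]
    have hVVH : ∀ u v : L, u ∈ V → v ∈ V → θ ⁅u, v⁆ = ⁅u, v⁆ := by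
      intro u v hu hv
      rw [hVmem] at hu hv
      rw [hlie, hu, hv, neg_lie, lie_neg, neg_neg]
    set B : Submodule ℂ L := Submodule.span ℂ {z : L | ∃ u ∈ V, ∃ v ∈ V, ⁅u, v⁆ = z} with hBdef
    have hgen : ∀ u v : L, u ∈ V → v ∈ V → ⁅u, v⁆ ∈ B := by
      intro u v hu hv
      exact Submodule.subset_span ⟨u, hu, v, hv, rfl⟩
    -- h acting on B stays in B
    have hHB : ∀ h m : L, θ h = h → m ∈ B → ⁅h, m⁆ ∈ B := by
      intro h m hh hm
      induction hm using Submodule.span_induction with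
      | mem z hz =>
        obtain ⟨u, hu, v, hv, rfl⟩ := hz
        rw [leibniz_lie]
        exact add_mem (hgen _ _ (hHV _ _ hh hu) hv) (hgen _ _ hu (hHV _ _ hh hv))
      | zero => simp
      | add a b _ _ ha hb => rw [lie_add]; exact add_mem ha hb
      | smul c a _ ha => rw [lie_smul]; exact Submodule.smul_mem _ _ ha
    -- v acting on B lands in V ⊔ B
    have hVB : ∀ w m : L, w ∈ V → m ∈ B → ⁅w, m⁆ ∈ V ⊔ B := by
      intro w m hw hm
      induction hm using Submodule.span_induction with
      | mem z hz =>
        obtain ⟨u, hu, v, hv, rfl⟩ := hz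
        rw [leibniz_lie]
        exact Submodule.mem_sup_left
          (add_mem (hHV _ _ (hVVH _ _ hw hu) hv)
            (by rw [← lie_skew]; exact neg_mem (hHV _ _ (hVVH _ _ hw hv) hu)))
      | zero => simp
      | add a b _ _ ha hb => rw [lie_add]; exact add_mem ha hb
      | smul c a _ ha => rw [lie_smul]; exact Submodule.smul_mem _ _ ha
    -- V ⊔ B is a Lie ideal
    have key : ∀ (x m : L), m ∈ V ⊔ B → ⁅x, m⁆ ∈ V ⊔ B := by
      intro x m hm
      obtain ⟨m₁, hm₁, m₂, hm₂, rfl⟩ := Submodule.mem_sup.mp hm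
      have hx : x = ((1:ℂ)/2) • (x + θ x) + ((1:ℂ)/2) • (x - θ x) := by
        rw [smul_add, smul_sub]; module
      have hh : θ (((1:ℂ)/2) • (x + θ x)) = ((1:ℂ)/2) • (x + θ x) := by
        rw [hsmul, hadd, hinv, add_comm]
      have hv : ((1:ℂ)/2) • (x - θ x) ∈ V := by
        rw [hVmem, hsmul, hsub, hinv, ← smul_neg, neg_sub]
      rw [hx, add_lie, lie_add, lie_add]
      refine add_mem (add_mem ?_ ?_) (add_mem ?_ ?_)
      · exact Submodule.mem_sup_left (hHV _ _ hh hm₁)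
      · exact Submodule.mem_sup_right (hHB _ _ hh hm₂)
      · exact Submodule.mem_sup_right (hgen _ _ hv hm₁)
      · exact hVB _ _ hv hm₂
    let W : LieIdeal ℂ L :=
      { toSubmodule := V ⊔ B
        lie_mem := fun {x m} hm => key x m hm }
    have hWmem : ∀ m : L, m ∈ W ↔ m ∈ V ⊔ B := fun m => Iff.rfl
    -- W is nonzero
    obtain ⟨x₀, hx₀⟩ := hne
    have hWne : W ≠ ⊥ := by
      intro hbot
      have hV0 : x₀ - θ x₀ ∈ V := by
        rw [hVmem, hsub, hinv, neg_sub]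
      have hmem : x₀ - θ x₀ ∈ W := Submodule.mem_sup_left hV0
      rw [hbot, LieSubmodule.mem_bot, sub_eq_zero] at hmem
      exact hx₀ hmem.symm
    have hWtop : W = ⊤ := (LieAlgebra.IsSimple.eq_bot_or_eq_top W).resolve_left hWne
    -- ξ kills everything in B
    have hkillB : ∀ m : L, m ∈ B → ⁅ξ, m⁆ = 0 := by
      intro m hm
      induction hm using Submodule.span_induction with
      | mem z hz =>
        obtain ⟨u, hu, v, hv, rfl⟩ := hz
        rw [leibniz_lie, hcomm u ((hVmem u).mp hu), hcomm v ((hVmem v).mp hv),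
          zero_lie, lie_zero, add_zero]
      | zero => simp
      | add a b _ _ ha hb => rw [lie_add, ha, hb, add_zero]
      | smul c a _ ha => rw [lie_smul, ha, smul_zero]
    have hcentral : ∀ y : L, ⁅ξ, y⁆ = 0 := by
      intro y
      have hy : y ∈ W := by rw [hWtop]; trivial
      rw [hWmem] at hy
      obtain ⟨m₁, hm₁, m₂, hm₂, rfl⟩ := Submodule.mem_sup.mp hy
      rw [lie_add, hcomm m₁ ((hVmem m₁).mp hm₁), hkillB m₂ hm₂, add_zero]
    -- so ξ is in the center, which is trivial
    have hξcenter : ξ ∈ LieAlgebra.center ℂ L := by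
      intro y
      rw [← lie_skew, hcentral, neg_zero]
    rw [LieAlgebra.center_eq_bot, LieSubmodule.mem_bot] at hξcenter
    exact hξcenter
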